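/- Let p ≥ 1 be an integer, let η : ℝ^p → [0, ∞) be continuous, and let λ₀ ∈ ℝ^p with η(λ₀) = 0. Let b ∈ ℤ, let θ : [0,∞) × ℝ^p → ℝ be continuous with compact support, and let χ : ℝ^p → ℝ be integrable with compact support and ∫_{ℝ^p} χ(λ) dλ = 1. Define m(λ) := 2η(λ) ∑_{n=0}^∞ θ(η(λ)(2n + |b|), λ) when η(λ) > 0, and m(λ) := ∫_0^∞ θ(a, λ) da when η(λ) = 0. Then ∫_{ℝ^p} ε^{−p} χ((λ − λ₀)/ε) m(λ) dλ → ∫_0^∞ θ(a, λ₀) da as ε → 0⁺. -/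

import Mathlib

open MeasureTheory Filter Set

section helpers
variable {p : ℕ} {θ : ℝ × (Fin p → ℝ) → ℝ} {R C c : ℝ}

private lemma theta_vanish (hR : ∀ a lam, θ (a, lam) ≠ 0 → |a| ≤ R) (hc : 0 ≤ c)
    {h : ℝ} (hh : 0 < h) (lam : Fin p → ℝ) :
    ∀ n : ℕ, ⌈R/(2*h)⌉₊ + 1 ≤ n → θ (h*(2*(n:ℝ)+c), lam) = 0 := by
  intro n hn
  by_contra hne
  have h1 := hR _ lam hne
  rw [abs_le] at h1
  have h2 : R / (2*h) ≤ (⌈R/(2*h)⌉₊ : ℝ) := Nat.le_ceil _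
  have h3 : ((⌈R/(2*h)⌉₊:ℕ):ℝ) + 1 ≤ n := by exact_mod_cast hn
  have h4 : R / (2*h) * (2*h) ≤ ((⌈R/(2*h)⌉₊:ℕ):ℝ) * (2*h) :=
    mul_le_mul_of_nonneg_right h2 (by linarith)
  rw [div_mul_cancel₀ R (by linarith : 2*h ≠ 0)] at h4
  nlinarith [h1.2]

private lemma theta_summable (hR : ∀ a lam, θ (a, lam) ≠ 0 → |a| ≤ R) (hc : 0 ≤ c)
    {h : ℝ} (hh : 0 < h) (lam : Fin p → ℝ) :
    Summable (fun n : ℕ => θ (h*(2*(n:ℝ)+c), lam)) :=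
  summable_of_ne_finset_zero (s := Finset.range (⌈R/(2*h)⌉₊ + 1)) fun n hn =>
    theta_vanish hR hc hh lam n (by rw [Finset.mem_range, not_lt] at hn; exact hn)

private lemma f_integrable (hθc : Continuous θ) (hR : ∀ a lam, θ (a, lam) ≠ 0 → |a| ≤ R)
    (lam : Fin p → ℝ) : IntegrableOn (fun a => θ (a, lam)) (Ioi (0:ℝ)) := by
  have hfc : Continuous (fun a => θ (a, lam)) := hθc.comp (continuous_id.prodMk continuous_const)
  have hfs : HasCompactSupport (fun a => θ (a, lam)) := by
    apply HasCompactSupport.intro (isCompact_Icc (a := -R) (b := R))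
    intro x hx
    by_contra hfx
    exact hx (abs_le.mp (hR x lam hfx))
  exact (hfc.integrable_of_hasCompactSupport hfs).integrableOn

private lemma integral_cont (hθc : Continuous θ) (hR : ∀ a lam, θ (a, lam) ≠ 0 → |a| ≤ R)
    (hC : ∀ x, |θ x| ≤ C) :
    Continuous (fun lam : Fin p → ℝ => ∫ a in Set.Ioi (0:ℝ), θ (a, lam)) := by
  rw [continuous_iff_continuousAt]
  intro lam0
  apply continuousAt_of_dominated (bound := Set.indicator (Icc (-R) R) (fun _ => C))
  · exact Eventually.of_forall fun lam =>
      ((hθc.comp (continuous_id.prodMk continuous_const)).aestronglyMeasurable).restrict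
  · refine Eventually.of_forall fun lam => ae_of_all _ fun a => ?_
    by_cases ha : a ∈ Icc (-R) R
    · rw [Set.indicator_of_mem ha]
      rw [Real.norm_eq_abs]
      exact hC _
    · rw [Set.indicator_of_notMem ha]
      have hz : θ (a, lam) = 0 := by
        by_contra hne
        exact ha (abs_le.mp (hR a lam hne))
      simp [hz]
  · rw [integrable_indicator_iff measurableSet_Icc]
    exact (integrableOn_const_iff).mpr (Or.inr (lt_of_le_of_lt (Measure.restrict_apply_le _ _)
      measure_Icc_lt_top))
  · exact ae_of_all _ fun a => (hθc.comp (continuous_const.prodMk continuous_id)).continuousAt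

end helpers

private lemma riemann_step {p : ℕ} (θ : ℝ × (Fin p → ℝ) → ℝ) (hθc : Continuous θ)
    (hθs : HasCompactSupport θ)
    {R : ℝ} (hR0 : 0 ≤ R) (hR : ∀ a lam, θ (a, lam) ≠ 0 → |a| ≤ R)
    (c : ℝ) (hc : 0 ≤ c) {ε : ℝ} (hε : 0 < ε) :
    ∃ δ > 0, ∀ (lam : Fin p → ℝ) (h : ℝ), 0 < h → h < δ →
      |2 * h * ∑' n : ℕ, θ (h * (2 * n + c), lam) - ∫ a in Set.Ioi (0:ℝ), θ (a, lam)| ≤ ε := by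
  set ε' := ε / (R + 5) with hε'def
  have hε' : 0 < ε' := div_pos hε (by linarith)
  obtain ⟨δ', hδ'0, hδ'⟩ := Metric.uniformContinuous_iff.mp
    (hθs.uniformContinuous_of_continuous hθc) ε' hε'
  refine ⟨min 1 (δ' / (3 + c)), lt_min one_pos (div_pos hδ'0 (by linarith)), ?_⟩
  intro lam h hh hhδ
  have hh1 : h < 1 := lt_of_lt_of_le hhδ (min_le_left _ _)
  have hhδ' : h * (2 + c) < δ' := by
    have h1 : h < δ' / (3 + c) := lt_of_lt_of_le hhδ (min_le_right _ _)
    have : h * (2 + c) < δ' / (3 + c) * (3 + c) := by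
      have := mul_lt_mul_of_pos_right h1 (by linarith : (0:ℝ) < 3 + c)
      nlinarith
    rwa [div_mul_cancel₀ _ (by linarith : (3:ℝ) + c ≠ 0)] at this
  set f : ℝ → ℝ := fun a => θ (a, lam) with hfdef
  have hfc : Continuous f := hθc.comp (continuous_id.prodMk continuous_const)
  have hfs : HasCompactSupport f := by
    apply HasCompactSupport.intro (isCompact_Icc (a := -R) (b := R))
    intro x hx
    by_contra hfx
    exact hx (abs_le.mp (hR x lam hfx))
  have hfi : IntegrableOn f (Ioi 0) := (hfc.integrable_of_hasCompactSupport hfs).integrableOn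
  set I : ℕ → Set ℝ := fun n => Ioc (2*h*n) (2*h*(n+1)) with hIdef
  have hImeas : ∀ n, MeasurableSet (I n) := fun n => measurableSet_Ioc
  have hIdisj : Pairwise (Function.onFun Disjoint I) := by
    intro m n hmn
    simp only [Function.onFun, hIdef, Set.Ioc_disjoint_Ioc]
    rcases lt_or_gt_of_ne hmn with hlt | hlt
    · have : (m:ℝ) + 1 ≤ n := by exact_mod_cast hlt
      rw [min_le_iff]
      left
      rw [le_max_iff]
      right
      nlinarith
    · have : (n:ℝ) + 1 ≤ m := by exact_mod_cast hlt
      rw [min_le_iff]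
      right
      rw [le_max_iff]
      left
      nlinarith
  have hIunion : (⋃ n, I n) = Ioi (0:ℝ) := by
    ext a
    simp only [mem_iUnion, hIdef, mem_Ioc, mem_Ioi]
    constructor
    · rintro ⟨n, h1, _⟩
      have : (0:ℝ) ≤ 2*h*n := by positivity
      linarith
    · intro ha
      set t := a / (2*h) with htdef
      have ht : 0 < t := div_pos ha (by linarith)
      have hNt : 0 < ⌈t⌉₊ := Nat.ceil_pos.mpr ht
      refine ⟨⌈t⌉₊ - 1, ?_, ?_⟩
      · have h1 : ¬ (t ≤ (⌈t⌉₊ - 1 : ℕ)) := by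
          intro hcon
          have := Nat.ceil_le.mpr hcon
          omega
        push_neg at h1
        have : 2*h*((⌈t⌉₊ - 1 : ℕ):ℝ) < 2*h*t := by
          apply mul_lt_mul_of_pos_left h1 (by linarith)
        rwa [mul_div_cancel₀ a (by linarith : 2*h ≠ 0)] at this
      · have h2 : t ≤ ⌈t⌉₊ := Nat.le_ceil t
        have h3 : ((⌈t⌉₊ - 1 : ℕ):ℝ) + 1 = ⌈t⌉₊ := by
          have : ⌈t⌉₊ - 1 + 1 = ⌈t⌉₊ := by omega
          exact_mod_cast this
        rw [h3]
        calc a = 2*h*t := by rw [htdef, mul_div_cancel₀ a (by linarith : 2*h ≠ 0)]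
        _ ≤ 2*h*⌈t⌉₊ := by apply mul_le_mul_of_nonneg_left h2 (by linarith)
  have hint : ∫ a in Ioi (0:ℝ), f a = ∑' n, ∫ a in I n, f a := by
    rw [← hIunion]
    exact integral_iUnion hImeas hIdisj (hIunion ▸ hfi)
  set N := ⌈R / (2*h)⌉₊ with hNdef
  have hbig : ∀ n : ℕ, N + 1 ≤ n → R < 2*h*n := by
    intro n hn
    have h1 : R / (2*h) ≤ N := Nat.le_ceil _
    have h2 : (N:ℝ) + 1 ≤ n := by exact_mod_cast hn
    have : R / (2*h) * (2*h) ≤ (N:ℝ) * (2*h) := by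
      apply mul_le_mul_of_nonneg_right h1 (by linarith)
    rw [div_mul_cancel₀ R (by linarith : 2*h ≠ 0)] at this
    nlinarith
  have hvan1 : ∀ n : ℕ, n ∉ Finset.range (N+1) → θ (h * (2 * n + c), lam) = 0 := by
    intro n hn
    rw [Finset.mem_range, not_lt] at hn
    by_contra hne
    have := hR _ lam hne
    have harg : R < h * (2*n + c) := by
      have := hbig n hn
      nlinarith
    rw [abs_le] at this
    linarith [this.2]
  have hvan2 : ∀ n : ℕ, n ∉ Finset.range (N+1) → (∫ a in I n, f a) = 0 := by
    intro n hn
    rw [Finset.mem_range, not_lt] at hn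
    have : EqOn f 0 (I n) := by
      intro a ha
      simp only [hIdef, mem_Ioc] at ha
      by_contra hne
      simp only [Pi.zero_apply] at hne
      have h1 := hR a lam hne
      rw [abs_le] at h1
      have h2 := hbig n hn
      linarith [h1.2]
    rw [setIntegral_congr_fun (hImeas n) this]
    simp
  have hsum1 : ∑' n : ℕ, θ (h * (2 * n + c), lam) = ∑ n ∈ Finset.range (N+1), θ (h * (2 * n + c), lam) :=
    tsum_eq_sum hvan1
  have hsum2 : ∑' n : ℕ, ∫ a in I n, f a = ∑ n ∈ Finset.range (N+1), ∫ a in I n, f a :=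
    tsum_eq_sum hvan2
  have hvol : ∀ n : ℕ, (volume (I n)).toReal = 2*h := by
    intro n
    simp only [hIdef, Real.volume_Ioc]
    rw [ENNReal.toReal_ofReal (by nlinarith : (0:ℝ) ≤ 2*h*(n+1) - 2*h*n)]
    ring
  have hterm : ∀ n ∈ Finset.range (N+1),
      |2 * h * θ (h * (2 * n + c), lam) - ∫ a in I n, f a| ≤ ε' * (2*h) := by
    intro n _
    have hconst : ∫ a in I n, θ (h * (2 * n + c), lam) = 2 * h * θ (h * (2 * n + c), lam) := by
      rw [setIntegral_const, measureReal_def, hvol n, smul_eq_mul]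
    rw [← hconst, ← integral_sub ((integrableOn_const_iff (C := θ (h * (2 * n + c), lam)) (s := I n) (μ := volume)).mpr (Or.inr (by
        rw [hIdef]; exact measure_Ioc_lt_top))) (hfi.mono_set (by
        rw [← hIunion]; exact subset_iUnion I n))]
    have : ∀ a ∈ I n, ‖θ (h * (2 * n + c), lam) - f a‖ ≤ ε' := by
      intro a ha
      simp only [hIdef, mem_Ioc] at ha
      have hdist : dist ((h * (2 * n + c), lam) : ℝ × (Fin p → ℝ)) (a, lam) < δ' := by
        rw [Prod.dist_eq]
        simp only [dist_self]
        rw [max_eq_left dist_nonneg]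
        rw [Real.dist_eq, abs_lt]
        constructor
        · nlinarith
        · nlinarith
      have := hδ' hdist
      rw [Real.dist_eq] at this
      exact le_of_lt this
    calc ‖∫ a in I n, (θ (h * (2 * n + c), lam) - f a)‖
        ≤ ε' * (volume (I n)).toReal :=
          norm_setIntegral_le_of_norm_le_const (measure_Ioc_lt_top) this
      _ = ε' * (2*h) := by rw [hvol n]
  have hNbound : 2*h*((N:ℝ)+1) ≤ R + 4 := by
    have h1 : (N:ℝ) < R/(2*h) + 1 := Nat.ceil_lt_add_one (by positivity)
    have h2 : R/(2*h) * (2*h) = R := div_mul_cancel₀ R (by linarith : 2*h ≠ 0)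
    nlinarith
  calc |2 * h * ∑' n : ℕ, θ (h * (2 * n + c), lam) - ∫ a in Set.Ioi (0:ℝ), θ (a, lam)|
      = |∑ n ∈ Finset.range (N+1), (2 * h * θ (h * (2 * n + c), lam) - ∫ a in I n, f a)| := by
        rw [hint, hsum1, hsum2, Finset.mul_sum, ← Finset.sum_sub_distrib]
    _ ≤ ∑ n ∈ Finset.range (N+1), |2 * h * θ (h * (2 * n + c), lam) - ∫ a in I n, f a| :=
        Finset.abs_sum_le_sum_abs _ _
    _ ≤ ∑ n ∈ Finset.range (N+1), ε' * (2*h) := Finset.sum_le_sum hterm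
    _ = ((N:ℝ)+1) * (ε' * (2*h)) := by
        rw [Finset.sum_const, Finset.card_range]
        push_cast
        ring
    _ ≤ (R+4) * ε' := by nlinarith
    _ ≤ ε := by
        have h5 : (0:ℝ) < R + 5 := by linarith
        rw [hε'def, mul_comm, div_mul_eq_mul_div, div_le_iff₀ h5]
        nlinarith
private noncomputable def mfun {p : ℕ} (η : (Fin p → ℝ) → ℝ) (θ : ℝ × (Fin p → ℝ) → ℝ) (c : ℝ)
    (lam : Fin p → ℝ) : ℝ :=
  if η lam = 0 then ∫ a in Set.Ioi (0:ℝ), θ (a, lam)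
  else 2 * η lam * ∑' n : ℕ, θ (η lam * (2 * (n:ℝ) + c), lam)

section mlemmas
variable {p : ℕ} {η : (Fin p → ℝ) → ℝ} {θ : ℝ × (Fin p → ℝ) → ℝ} {R C M c : ℝ}

private lemma m_bound (hηnn : ∀ lam, 0 ≤ η lam) (hθc : Continuous θ)
    (hR0 : 0 ≤ R) (hR : ∀ a lam, θ (a, lam) ≠ 0 → |a| ≤ R)
    (hC0 : 0 ≤ C) (hC : ∀ x, |θ x| ≤ C)
    (hM0 : 0 ≤ M) (hM : ∀ a lam, θ (a, lam) ≠ 0 → η lam ≤ M) (hc : 0 ≤ c) :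
    ∀ lam, |mfun η θ c lam| ≤ C * (R + 4*M + 4) := by
  intro lam
  rw [mfun]
  by_cases h0 : η lam = 0
  · rw [if_pos h0]
    have hsplit : Ioc (0:ℝ) R ∪ Ioi R = Ioi (0:ℝ) := Ioc_union_Ioi_eq_Ioi hR0
    have hzero : ∫ a in Ioi R, θ (a, lam) = 0 := by
      have : EqOn (fun a => θ (a, lam)) 0 (Ioi R) := by
        intro a ha
        rw [mem_Ioi] at ha
        by_contra hne
        simp only [Pi.zero_apply] at hne
        have := abs_le.mp (hR a lam hne)
        linarith [this.2]
      rw [setIntegral_congr_fun measurableSet_Ioi this]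
      simp
    have hint : ∫ a in Ioi (0:ℝ), θ (a, lam) = ∫ a in Ioc (0:ℝ) R, θ (a, lam) := by
      rw [← hsplit, setIntegral_union (Set.Ioc_disjoint_Ioi le_rfl) measurableSet_Ioi
        ((f_integrable hθc hR lam).mono_set (by rw [← hsplit]; exact subset_union_left))
        ((f_integrable hθc hR lam).mono_set (by rw [← hsplit]; exact subset_union_right)),
        hzero, add_zero]
    rw [hint]
    have hb : ‖∫ a in Ioc (0:ℝ) R, θ (a, lam)‖ ≤ C * (volume (Ioc (0:ℝ) R)).toReal :=
      norm_setIntegral_le_of_norm_le_const measure_Ioc_lt_top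
        (fun a _ => by rw [Real.norm_eq_abs]; exact hC _)
    rw [Real.norm_eq_abs, Real.volume_Ioc, ENNReal.toReal_ofReal (by linarith)] at hb
    nlinarith
  · rw [if_neg h0]
    have hη : 0 < η lam := (hηnn lam).lt_of_ne (Ne.symm h0)
    by_cases hMle : η lam ≤ M
    · set h := η lam
      set N := ⌈R/(2*h)⌉₊ with hNdef
      have hsum : ∑' n : ℕ, θ (h * (2 * (n:ℝ) + c), lam)
          = ∑ n ∈ Finset.range (N+1), θ (h * (2 * (n:ℝ) + c), lam) :=
        tsum_eq_sum fun n hn => theta_vanish hR hc hη lam n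
          (by rw [Finset.mem_range, not_lt] at hn; exact hn)
      rw [hsum]
      have habs : |∑ n ∈ Finset.range (N+1), θ (h * (2 * (n:ℝ) + c), lam)| ≤ ((N:ℝ)+1) * C := by
        calc |∑ n ∈ Finset.range (N+1), θ (h * (2 * (n:ℝ) + c), lam)|
            ≤ ∑ n ∈ Finset.range (N+1), |θ (h * (2 * (n:ℝ) + c), lam)| :=
              Finset.abs_sum_le_sum_abs _ _
          _ ≤ ∑ _n ∈ Finset.range (N+1), C := Finset.sum_le_sum fun n _ => hC _
          _ = ((N:ℝ)+1) * C := by rw [Finset.sum_const, Finset.card_range]; push_cast; ring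
      have hNb : 2*h*((N:ℝ)+1) ≤ R + 4*h := by
        have h1 : (N:ℝ) < R/(2*h) + 1 := Nat.ceil_lt_add_one (by positivity)
        have h2 : R/(2*h) * (2*h) = R := div_mul_cancel₀ R (by linarith : 2*h ≠ 0)
        nlinarith
      rw [abs_mul, abs_of_nonneg (by linarith : (0:ℝ) ≤ 2 * h)]
      calc 2*h*|∑ n ∈ Finset.range (N+1), θ (h * (2 * (n:ℝ) + c), lam)|
          ≤ 2*h*(((N:ℝ)+1) * C) := mul_le_mul_of_nonneg_left habs (by linarith)
        _ = (2*h*((N:ℝ)+1)) * C := by ring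
        _ ≤ (R + 4*h) * C := mul_le_mul_of_nonneg_right hNb hC0
        _ ≤ C * (R + 4*M + 4) := by nlinarith
    · have hall : ∀ n : ℕ, θ (η lam * (2 * (n:ℝ) + c), lam) = 0 := by
        intro n
        by_contra hne
        exact hMle (hM _ lam hne)
      simp only [hall, tsum_zero, mul_zero, abs_zero]
      positivity

private lemma m_meas (hηc : Continuous η) (hηnn : ∀ lam, 0 ≤ η lam) (hθc : Continuous θ)
    (hR0 : 0 ≤ R) (hR : ∀ a lam, θ (a, lam) ≠ 0 → |a| ≤ R) (hC : ∀ x, |θ x| ≤ C) (hc : 0 ≤ c) :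
    Measurable (mfun η θ c) := by
  have hmeas0 : MeasurableSet {lam : Fin p → ℝ | η lam = 0} :=
    hηc.measurable (measurableSet_singleton 0)
  apply measurable_of_tendsto_metrizable' (f := fun (k : ℕ) lam =>
    if η lam = 0 then ∫ a in Set.Ioi (0:ℝ), θ (a, lam)
    else 2 * η lam * ∑ n ∈ Finset.range k, θ (η lam * (2 * (n:ℝ) + c), lam)) atTop
  · intro k
    apply Measurable.ite hmeas0
    · exact (integral_cont hθc hR hC).measurable
    · apply Measurable.mul
      · exact (continuous_const.mul hηc).measurable
      · apply Finset.measurable_sum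
        intro n _
        exact (hθc.comp ((hηc.mul continuous_const).prodMk continuous_id)).measurable
  · rw [tendsto_pi_nhds]
    intro lam
    by_cases h0 : η lam = 0
    · simp only [h0, if_pos, mfun, if_true]
      simp [h0]
    · simp only [mfun, if_neg h0]
      have hη : 0 < η lam := (hηnn lam).lt_of_ne (Ne.symm h0)
      exact ((theta_summable hR hc hη lam).hasSum.tendsto_sum_nat).const_mul _

private lemma m_tendsto (hηc : Continuous η) (hηnn : ∀ lam, 0 ≤ η lam)
    (hθc : Continuous θ) (hθs : HasCompactSupport θ)
    (hR0 : 0 ≤ R) (hR : ∀ a lam, θ (a, lam) ≠ 0 → |a| ≤ R) (hC : ∀ x, |θ x| ≤ C) (hc : 0 ≤ c)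
    {lam0 : Fin p → ℝ} (h0 : η lam0 = 0) :
    Tendsto (mfun η θ c) (nhds lam0) (nhds (∫ a in Set.Ioi (0:ℝ), θ (a, lam0))) := by
  rw [Metric.tendsto_nhds]
  intro ε hε
  obtain ⟨δ, hδ0, hδ⟩ := riemann_step θ hθc hθs hR0 hR c hc (ε := ε/4) (by linarith)
  have hev1 : ∀ᶠ lam in nhds lam0, η lam < δ := by
    have : Tendsto η (nhds lam0) (nhds 0) := h0 ▸ hηc.tendsto lam0
    exact this.eventually_lt_const hδ0
  have hev2 : ∀ᶠ lam in nhds lam0,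
      dist (∫ a in Set.Ioi (0:ℝ), θ (a, lam)) (∫ a in Set.Ioi (0:ℝ), θ (a, lam0)) < ε/2 := by
    have := ((integral_cont hθc hR hC).tendsto lam0)
    exact Metric.tendsto_nhds.mp this (ε/2) (by linarith)
  filter_upwards [hev1, hev2] with lam h1 h2
  by_cases hz : η lam = 0
  · rw [mfun, if_pos hz]
    linarith
  · rw [mfun, if_neg hz]
    have hη : 0 < η lam := (hηnn lam).lt_of_ne (Ne.symm hz)
    have := hδ lam (η lam) hη h1
    rw [Real.dist_eq] at h2 ⊢
    calc |2 * η lam * ∑' n : ℕ, θ (η lam * (2 * (n:ℝ) + c), lam) - ∫ a in Set.Ioi (0:ℝ), θ (a, lam0)|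
        ≤ |2 * η lam * ∑' n : ℕ, θ (η lam * (2 * (n:ℝ) + c), lam) - ∫ a in Set.Ioi (0:ℝ), θ (a, lam)|
          + |(∫ a in Set.Ioi (0:ℝ), θ (a, lam)) - ∫ a in Set.Ioi (0:ℝ), θ (a, lam0)| := by
          exact abs_sub_le _ _ _
      _ < ε := by linarith

end mlemmas
/-- Approximate-identity lemma in the `λ` variable: integrating the measures
`dμ^λ_{j,b}`-averages of `θ` against a Dirac-approximating family concentrated at a
degenerate frequency `λ₀` recovers `∫_0^∞ θ(a, λ₀) da`. -/
theorem dirac_approximation_at_degenerate_frequency (p : ℕ) (hp : 1 ≤ p)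
    (η : (Fin p → ℝ) → ℝ) (hηc : Continuous η) (hηnn : ∀ lam, 0 ≤ η lam)
    (lam0 : Fin p → ℝ) (h0 : η lam0 = 0) (b : ℤ)
    (θ : ℝ × (Fin p → ℝ) → ℝ) (hθc : Continuous θ) (hθs : HasCompactSupport θ)
    (χ : (Fin p → ℝ) → ℝ) (hχi : Integrable χ) (hχs : HasCompactSupport χ)
    (hχ1 : (∫ lam : Fin p → ℝ, χ lam) = 1) :
    Tendsto (fun ε : ℝ =>
        ∫ lam : Fin p → ℝ,
          (ε ^ p)⁻¹ * χ (fun i => (lam i - lam0 i) / ε) *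
            (if η lam = 0 then ∫ a in Set.Ioi (0 : ℝ), θ (a, lam)
             else 2 * η lam * ∑' n : ℕ, θ (η lam * (2 * n + |(b : ℝ)|), lam)))
      (nhdsWithin 0 (Set.Ioi 0))
      (nhds (∫ a in Set.Ioi (0 : ℝ), θ (a, lam0))) := by
  set c : ℝ := |(b : ℝ)| with hcdef
  have hc : 0 ≤ c := abs_nonneg _
  -- radius R
  obtain ⟨r, hr⟩ := ((hθs.image continuous_fst).isBounded).subset_closedBall 0
  set R : ℝ := max r 0 with hRdef
  have hR0 : 0 ≤ R := le_max_right _ _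
  have hR : ∀ a lam, θ (a, lam) ≠ 0 → |a| ≤ R := by
    intro a lam hne
    have ha : a ∈ Prod.fst '' tsupport θ := ⟨(a, lam), subset_tsupport θ hne, rfl⟩
    have := hr ha
    rw [Metric.mem_closedBall, Real.dist_eq, sub_zero] at this
    exact this.trans (le_max_left _ _)
  -- bound C
  obtain ⟨C, hCn⟩ := hθs.exists_bound_of_continuous hθc
  have hC : ∀ x, |θ x| ≤ C := fun x => (Real.norm_eq_abs _) ▸ hCn x
  have hC0 : 0 ≤ C := le_trans (abs_nonneg (θ (0, lam0))) (hC _)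
  -- bound M on η over the support
  obtain ⟨M0, hM0'⟩ := ((hθs.image continuous_snd).image hηc).bddAbove
  set M : ℝ := max M0 0 with hMdef
  have hM0 : 0 ≤ M := le_max_right _ _
  have hM : ∀ a lam, θ (a, lam) ≠ 0 → η lam ≤ M := by
    intro a lam hne
    have : η lam ∈ η '' (Prod.snd '' tsupport θ) :=
      ⟨lam, ⟨(a, lam), subset_tsupport θ hne, rfl⟩, rfl⟩
    exact (hM0' this).trans (le_max_left _ _)
  set C' : ℝ := C * (R + 4*M + 4) with hC'def
  set L : ℝ := ∫ a in Set.Ioi (0 : ℝ), θ (a, lam0) with hLdef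
  have hmeq : ∀ lam, (if η lam = 0 then ∫ a in Set.Ioi (0 : ℝ), θ (a, lam)
      else 2 * η lam * ∑' n : ℕ, θ (η lam * (2 * n + |(b : ℝ)|), lam)) = mfun η θ c lam := by
    intro lam
    rw [mfun]
  have hmb := m_bound hηnn hθc hR0 hR hC0 hC hM0 hM hc
  have hmm := m_meas hηc hηnn hθc hR0 hR hC hc
  have hmt := m_tendsto hηc hηnn hθc hθs hR0 hR hC hc h0
  -- change of variables
  have key : ∀ ε : ℝ, ε ∈ Set.Ioi (0:ℝ) →
      (∫ lam : Fin p → ℝ, (ε ^ p)⁻¹ * χ (fun i => (lam i - lam0 i) / ε) *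
        (if η lam = 0 then ∫ a in Set.Ioi (0 : ℝ), θ (a, lam)
         else 2 * η lam * ∑' n : ℕ, θ (η lam * (2 * n + |(b : ℝ)|), lam)))
      = ∫ u : Fin p → ℝ, χ u * mfun η θ c (lam0 + ε • u) := by
    intro ε hε
    rw [Set.mem_Ioi] at hε
    have hεp : (0:ℝ) < ε ^ p := pow_pos hε p
    set G : (Fin p → ℝ) → ℝ :=
      fun x => (ε ^ p)⁻¹ * χ (fun i => x i / ε) * mfun η θ c (lam0 + x) with hG
    have h1 : (fun lam : Fin p → ℝ => (ε ^ p)⁻¹ * χ (fun i => (lam i - lam0 i) / ε) *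
        (if η lam = 0 then ∫ a in Set.Ioi (0 : ℝ), θ (a, lam)
         else 2 * η lam * ∑' n : ℕ, θ (η lam * (2 * n + |(b : ℝ)|), lam)))
        = fun lam => G (lam - lam0) := by
      funext lam
      rw [hmeq lam]
      simp only [hG, Pi.sub_apply]
      congr 2
      abel
    rw [h1, integral_sub_right_eq_self G lam0]
    have h2 : ∫ x : Fin p → ℝ, G (ε • x) = (ε ^ p)⁻¹ • ∫ x : Fin p → ℝ, G x := by
      have := MeasureTheory.Measure.integral_comp_smul_of_nonneg (μ := volume) G ε (hR := hε.le)
      rwa [Module.finrank_fin_fun] at this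
    have h3 : ∀ u : Fin p → ℝ, G (ε • u) = (ε ^ p)⁻¹ * (χ u * mfun η θ c (lam0 + ε • u)) := by
      intro u
      simp only [hG, Pi.smul_apply, smul_eq_mul]
      rw [show (fun i => ε * u i / ε) = u by funext i; rw [mul_div_cancel_left₀ _ (ne_of_gt hε)]]
      ring
    have h4 : ∫ x : Fin p → ℝ, G (ε • x)
        = (ε ^ p)⁻¹ * ∫ u : Fin p → ℝ, χ u * mfun η θ c (lam0 + ε • u) := by
      simp_rw [h3]
      rw [integral_const_mul]
    rw [h4] at h2
    have := congrArg (fun t => (ε ^ p) • t) h2.symm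
    simpa [smul_eq_mul, ← mul_assoc, mul_inv_cancel₀ (ne_of_gt hεp)] using this
  rw [tendsto_congr' (Filter.eventuallyEq_of_mem self_mem_nhdsWithin key)]
  -- dominated convergence
  have hLfin : (∫ u : Fin p → ℝ, χ u * L) = L := by
    rw [integral_mul_const, hχ1, one_mul]
  rw [← hLfin]
  apply tendsto_integral_filter_of_dominated_convergence (bound := fun u => |χ u| * C')
  · apply Eventually.of_forall
    intro ε
    apply (hχi.aestronglyMeasurable.mul _)
    exact (hmm.comp ((continuous_const.add (continuous_id.const_smul ε)).measurable)).aestronglyMeasurable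
  · apply Eventually.of_forall
    intro ε
    apply ae_of_all
    intro u
    rw [Real.norm_eq_abs, abs_mul]
    exact mul_le_mul_of_nonneg_left (hmb _) (abs_nonneg _)
  · exact hχi.abs.mul_const C'
  · apply ae_of_all
    intro u
    apply Tendsto.const_mul
    have hpath : Tendsto (fun ε : ℝ => lam0 + ε • u) (nhdsWithin 0 (Set.Ioi 0)) (nhds lam0) := by
      have hcont : Continuous (fun ε : ℝ => lam0 + ε • u) :=
        continuous_const.add (continuous_id.smul continuous_const)
      have := hcont.tendsto 0
      rw [show lam0 + (0:ℝ) • u = lam0 by simp] at this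
      exact this.mono_left nhdsWithin_le_nhds
    exact hmt.comp hpath
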